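/- Let D be a separable metric space, Q a fixed Borel probability measure on D, and S_n, S_n^(1), ..., S_n^(M) as in the bootstrap setup with the S_n^(i) conditionally independent given X_n. If d_BL(Pr^{S_n^(1)|X_n}, Q) → 0 in probability and S_n converges weakly to a random variable S with law Q', then the joint law of (S_n, S_n^(1), ..., S_n^(M)) converges weakly to Q' ⊗ Q^{⊗M}, i.e., E[f₀(S_n) f₁(S_n^(1)) ⋯ f_M(S_n^(M))] → E[f₀(S)] ∏_{j=1}^M ∫ f_j dQ for all bounded Lipschitz f₀, ..., f_M. -/

import Mathlib

open MeasureTheory ProbabilityTheory Filter Topology BoundedContinuousFunction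

/-- The bounded Lipschitz distance between two measures. -/
noncomputable def dBL {D : Type*} [MeasurableSpace D] [PseudoMetricSpace D]
    (P Q : Measure D) : ℝ :=
  ⨆ h : {h : D → ℝ // (∀ x, |h x| ≤ 1) ∧ LipschitzWith 1 h},
    |∫ x, h.1 x ∂P - ∫ x, h.1 x ∂Q|

/-- `S 1, …, S M` are identically distributed and independent conditionally on
`X`, with common regular conditional distribution `κ (X ·)` given `X`. -/
def CondIID {Ω 𝒳 D : Type*} [MeasurableSpace Ω] [MeasurableSpace 𝒳]
    [MeasurableSpace D] (Pr : Measure Ω) (X : Ω → 𝒳) {M : ℕ}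
    (S : Fin M → Ω → D) (κ : Kernel 𝒳 D) : Prop :=
  ∀ (φ : 𝒳 → ℝ) (ψ : Fin M → D → ℝ), Measurable φ → (∀ x, |φ x| ≤ 1) →
    (∀ i, Measurable (ψ i)) → (∀ i x, |ψ i x| ≤ 1) →
    ∫ ω, φ (X ω) * ∏ i, ψ i (S i ω) ∂Pr
      = ∫ ω, φ (X ω) * ∏ i, ∫ x, ψ i x ∂(κ (X ω)) ∂Pr

lemma abs_integral_le_of_prob {D : Type*} [MeasurableSpace D] (P : Measure D)
    [IsProbabilityMeasure P] {h : D → ℝ} {C : ℝ} (hb : ∀ x, |h x| ≤ C) :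
    |∫ x, h x ∂P| ≤ C := by
  have := norm_integral_le_of_norm_le_const (μ := P) (f := h) (C := C)
    (Eventually.of_forall fun x => by simpa using hb x)
  simpa using this

lemma dBL_nonneg {D : Type*} [MeasurableSpace D] [PseudoMetricSpace D]
    (P Q : Measure D) : 0 ≤ dBL P Q :=
  Real.iSup_nonneg fun _ => abs_nonneg _

lemma le_dBL {D : Type*} [MeasurableSpace D] [PseudoMetricSpace D]
    (P Q : Measure D) [IsProbabilityMeasure P] [IsProbabilityMeasure Q]
    {h : D → ℝ} (hb : ∀ x, |h x| ≤ 1) (hl : LipschitzWith 1 h) :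
    |∫ x, h x ∂P - ∫ x, h x ∂Q| ≤ dBL P Q := by
  refine le_ciSup (f := fun h : {h : D → ℝ // (∀ x, |h x| ≤ 1) ∧ LipschitzWith 1 h} =>
    |∫ x, h.1 x ∂P - ∫ x, h.1 x ∂Q|) ?_ ⟨h, hb, hl⟩
  refine ⟨2, ?_⟩
  rintro r ⟨g, rfl⟩
  calc |∫ x, g.1 x ∂P - ∫ x, g.1 x ∂Q| ≤ |∫ x, g.1 x ∂P| + |∫ x, g.1 x ∂Q| := abs_sub _ _
  _ ≤ 1 + 1 := add_le_add (abs_integral_le_of_prob P g.2.1) (abs_integral_le_of_prob Q g.2.1)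
  _ = 2 := by norm_num

lemma le_dBL' {D : Type*} [MeasurableSpace D] [PseudoMetricSpace D]
    (P Q : Measure D) [IsProbabilityMeasure P] [IsProbabilityMeasure Q]
    {f : D → ℝ} {C : ℝ} {L : NNReal} (hb : ∀ x, |f x| ≤ C) (hl : LipschitzWith L f) :
    |∫ x, f x ∂P - ∫ x, f x ∂Q| ≤ max (max C 1) (L : ℝ) * dBL P Q := by
  set K : ℝ := max (max C 1) (L : ℝ) with hK
  have hK1 : (1:ℝ) ≤ K := le_trans (le_max_right C 1) (le_trans (le_refl _) (le_max_left _ _))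
  have hK0 : (0:ℝ) < K := lt_of_lt_of_le one_pos hK1
  set h : D → ℝ := fun x => f x / K with hh
  have hb' : ∀ x, |h x| ≤ 1 := by
    intro x
    rw [hh, abs_div, abs_of_pos hK0, div_le_one hK0]
    exact le_trans (hb x) (le_trans (le_max_left C 1) (le_max_left _ _))
  have hl' : LipschitzWith 1 h := by
    rw [lipschitzWith_iff_dist_le_mul]
    intro x y
    have hdd : dist (f x / K) (f y / K) = dist (f x) (f y) / K := by
      rw [Real.dist_eq, Real.dist_eq, ← sub_div, abs_div, abs_of_pos hK0]
    rw [hh]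
    simp only [hdd, NNReal.coe_one, one_mul]
    rw [div_le_iff₀ hK0]
    calc dist (f x) (f y) ≤ L * dist x y := hl.dist_le_mul x y
    _ ≤ K * dist x y := by
        apply mul_le_mul_of_nonneg_right _ dist_nonneg
        exact le_max_right _ _
    _ = dist x y * K := mul_comm _ _
  have key := le_dBL P Q hb' hl'
  have h1 : ∫ x, h x ∂P = (∫ x, f x ∂P) / K := integral_div K f
  have h2 : ∫ x, h x ∂Q = (∫ x, f x ∂Q) / K := integral_div K f
  rw [h1, h2, div_sub_div_same, abs_div, abs_of_pos hK0, div_le_iff₀ hK0] at key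
  linarith [key]

lemma prod_diff_bound {ι : Type*} (s : Finset ι) (a b : ι → ℝ) {C ε : ℝ} (hC : 1 ≤ C)
    (hε : 0 ≤ ε) (ha : ∀ i ∈ s, |a i| ≤ C) (hbb : ∀ i ∈ s, |b i| ≤ C)
    (hab : ∀ i ∈ s, |a i - b i| ≤ ε) :
    |∏ i ∈ s, a i - ∏ i ∈ s, b i| ≤ s.card * C ^ s.card * ε := by
  classical
  induction s using Finset.induction_on with
  | empty => simp [hε]
  | insert j s hj ih =>
    have hC0 : (0:ℝ) ≤ C := le_trans zero_le_one hC
    have haP : |∏ i ∈ s, a i| ≤ C ^ s.card := by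
      rw [Finset.abs_prod]
      calc ∏ i ∈ s, |a i| ≤ ∏ i ∈ s, C :=
        Finset.prod_le_prod (fun i _ => abs_nonneg _) (fun i hi => ha i (Finset.mem_insert_of_mem hi))
      _ = C ^ s.card := by rw [Finset.prod_const]
    have ihs := ih (fun i hi => ha i (Finset.mem_insert_of_mem hi))
      (fun i hi => hbb i (Finset.mem_insert_of_mem hi))
      (fun i hi => hab i (Finset.mem_insert_of_mem hi))
    rw [Finset.prod_insert hj, Finset.prod_insert hj, Finset.card_insert_of_notMem hj]
    have expand : a j * ∏ i ∈ s, a i - b j * ∏ i ∈ s, b i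
        = (a j - b j) * ∏ i ∈ s, a i + b j * (∏ i ∈ s, a i - ∏ i ∈ s, b i) := by ring
    rw [expand]
    have hCpow : (1:ℝ) ≤ C ^ s.card := one_le_pow₀ hC
    have hCpow' : C ^ s.card ≤ C ^ (s.card + 1) := by
      calc C ^ s.card = C ^ s.card * 1 := (mul_one _).symm
      _ ≤ C ^ s.card * C := by
          apply mul_le_mul_of_nonneg_left hC (pow_nonneg hC0 _)
      _ = C ^ (s.card + 1) := (pow_succ C s.card).symm
    calc |(a j - b j) * ∏ i ∈ s, a i + b j * (∏ i ∈ s, a i - ∏ i ∈ s, b i)|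
        ≤ |(a j - b j)| * |∏ i ∈ s, a i| + |b j| * |∏ i ∈ s, a i - ∏ i ∈ s, b i| := by
          refine le_trans (abs_add_le _ _) ?_
          rw [abs_mul, abs_mul]
      _ ≤ ε * C ^ s.card + C * (s.card * C ^ s.card * ε) := by
          refine add_le_add ?_ ?_
          · exact mul_le_mul (hab j (Finset.mem_insert_self j s)) haP (abs_nonneg _) hε
          · exact mul_le_mul (hbb j (Finset.mem_insert_self j s)) ihs (abs_nonneg _) hC0
      _ ≤ (s.card + 1) * C ^ (s.card + 1) * ε := by
          have h2 : C * (s.card * C ^ s.card * ε) = s.card * C ^ (s.card + 1) * ε := by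
            rw [pow_succ]; ring
          rw [h2]
          nlinarith [hε, hCpow', pow_nonneg hC0 (s.card + 1), Nat.cast_nonneg (α := ℝ) s.card]
      _ = (↑(s.card + 1) : ℝ) * C ^ (s.card + 1) * ε := by push_cast; ring

/-- If `d_BL(Pr^{S_n^{(1)} | X_n}, Q) → 0` in probability, the statistic
`S_n = T n (X n ·)` is a measurable function of the data and converges weakly
to a limit with law `Q'`, and the bootstrap replicates are identically
distributed and conditionally independent given `X_n`, then the joint law of
`(S_n, S_n^{(1)}, …, S_n^{(M)})` converges weakly to `Q' ⊗ Q^{⊗M}`, in the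
sense that `E[f₀(S_n) f₁(S_n^{(1)}) ⋯ f_M(S_n^{(M)})] → (∫ f₀ dQ') ∏_j ∫ f_j dQ`
for all bounded Lipschitz `f₀, f₁, …, f_M`. -/
theorem stmt11 {Ω 𝒳 D : Type*} [MeasurableSpace Ω] [MeasurableSpace 𝒳]
    [MetricSpace D] [MeasurableSpace D] [BorelSpace D]
    [TopologicalSpace.SeparableSpace D]
    (Pr : Measure Ω) [IsProbabilityMeasure Pr]
    (X : ℕ → Ω → 𝒳) (hX : ∀ n, Measurable (X n))
    (M : ℕ) (S : ℕ → Fin M → Ω → D) (hS : ∀ n i, Measurable (S n i))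
    (T : ℕ → 𝒳 → D) (hT : ∀ n, Measurable (T n))
    (κ : ℕ → Kernel 𝒳 D) (hκ : ∀ n, IsMarkovKernel (κ n))
    (hcond : ∀ n, CondIID Pr (X n) (S n) (κ n))
    (Q Q' : Measure D) [IsProbabilityMeasure Q] [IsProbabilityMeasure Q']
    (hBL : TendstoInMeasure Pr (fun n ω => dBL (κ n (X n ω)) Q) atTop
      (fun _ => 0))
    (hSweak : ∀ f : D →ᵇ ℝ,
      Tendsto (fun n => ∫ ω, f (T n (X n ω)) ∂Pr) atTop (𝓝 (∫ x, f x ∂Q'))) :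
    ∀ (f₀ : D → ℝ) (f : Fin M → D → ℝ) (C : ℝ) (L : NNReal),
      (∀ x, |f₀ x| ≤ C) → LipschitzWith L f₀ →
      (∀ i x, |f i x| ≤ C) → (∀ i, LipschitzWith L (f i)) →
      Tendsto (fun n => ∫ ω, f₀ (T n (X n ω)) * ∏ i, f i (S n i ω) ∂Pr) atTop
        (𝓝 ((∫ x, f₀ x ∂Q') * ∏ i, ∫ x, f i x ∂Q)) := by
  intro f₀ f C L hf₀b hf₀l hfb hfl
  classical
  haveI := fun n => hκ n
  set C' : ℝ := max C 1 with hC'def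
  have hC'1 : (1:ℝ) ≤ C' := le_max_right _ _
  have hC'0 : (0:ℝ) < C' := lt_of_lt_of_le one_pos hC'1
  have hCC' : C ≤ C' := le_max_left _ _
  set K : ℝ := max (max C 1) (L : ℝ) with hKdef
  have hK1 : (1:ℝ) ≤ K := le_trans hC'1 (le_max_left _ _)
  have hK0 : (0:ℝ) < K := lt_of_lt_of_le one_pos hK1
  have hf₀c : Continuous f₀ := hf₀l.continuous
  have hfc : ∀ i, Continuous (f i) := fun i => (hfl i).continuous
  -- the conditional expectation products
  set g : ℕ → Ω → ℝ := fun n ω => ∏ i, ∫ x, f i x ∂(κ n (X n ω)) with hgdef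
  set gQ : ℝ := ∏ i, ∫ x, f i x ∂Q with hgQdef
  -- measurability of g n
  have hkim : ∀ n (i : Fin M), Measurable fun x : 𝒳 => ∫ y, f i y ∂(κ n x) := by
    intro n i
    have h1 : StronglyMeasurable (Function.uncurry fun (_ : 𝒳) (y : D) => f i y) :=
      (hfc i).stronglyMeasurable.comp_measurable measurable_snd
    exact (MeasureTheory.StronglyMeasurable.integral_kernel_prod_right (κ := κ n) h1).measurable
  have hgm : ∀ n, Measurable (g n) := by
    intro n
    apply Finset.measurable_prod
    intro i _
    exact (hkim n i).comp (hX n)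
  -- uniform bounds on g
  have habs_int : ∀ (P : Measure D) [IsProbabilityMeasure P] (i : Fin M),
      |∫ x, f i x ∂P| ≤ C' := by
    intro P _ i
    exact le_trans (abs_integral_le_of_prob P (hfb i)) hCC'
  have hgb : ∀ n ω, |g n ω| ≤ C' ^ M := by
    intro n ω
    rw [hgdef]
    simp only
    rw [Finset.abs_prod]
    calc ∏ i, |∫ x, f i x ∂(κ n (X n ω))| ≤ ∏ _i : Fin M, C' :=
      Finset.prod_le_prod (fun i _ => abs_nonneg _) (fun i _ => habs_int _ i)
    _ = C' ^ M := by simp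
  have hgQb : |gQ| ≤ C' ^ M := by
    rw [hgQdef, Finset.abs_prod]
    calc ∏ i, |∫ x, f i x ∂Q| ≤ ∏ _i : Fin M, C' :=
      Finset.prod_le_prod (fun i _ => abs_nonneg _) (fun i _ => habs_int _ i)
    _ = C' ^ M := by simp
  -- Step A: conditioning identity
  have hrw : ∀ n, ∫ ω, f₀ (T n (X n ω)) * ∏ i, f i (S n i ω) ∂Pr
      = ∫ ω, f₀ (T n (X n ω)) * g n ω ∂Pr := by
    intro n
    have hφm : Measurable fun x => f₀ (T n x) / C' :=
      ((hf₀c.measurable).comp (hT n)).div_const _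
    have hφb : ∀ x, |f₀ (T n x) / C'| ≤ 1 := by
      intro x
      rw [abs_div, abs_of_pos hC'0, div_le_one hC'0]
      exact le_trans (hf₀b _) hCC'
    have hψm : ∀ i : Fin M, Measurable fun d => f i d / C' :=
      fun i => ((hfc i).measurable).div_const _
    have hψb : ∀ (i : Fin M) x, |f i x / C'| ≤ 1 := by
      intro i x
      rw [abs_div, abs_of_pos hC'0, div_le_one hC'0]
      exact le_trans (hfb i x) hCC'
    have key := hcond n (fun x => f₀ (T n x) / C') (fun i d => f i d / C') hφm hφb hψm hψb
    have hL : ∀ ω, (f₀ (T n (X n ω)) / C') * ∏ i, f i (S n i ω) / C'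
        = (f₀ (T n (X n ω)) * ∏ i, f i (S n i ω)) / C' ^ (M + 1) := by
      intro ω
      rw [Finset.prod_div_distrib, Finset.prod_const]
      simp only [Finset.card_univ, Fintype.card_fin]
      rw [div_mul_div_comm, ← pow_succ']
    have hR : ∀ ω, (f₀ (T n (X n ω)) / C') * ∏ i, ∫ x, f i x / C' ∂(κ n (X n ω))
        = (f₀ (T n (X n ω)) * g n ω) / C' ^ (M + 1) := by
      intro ω
      have : ∀ i : Fin M, ∫ x, f i x / C' ∂(κ n (X n ω))
          = (∫ x, f i x ∂(κ n (X n ω))) / C' := fun i => integral_div _ _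
      simp_rw [this]
      rw [Finset.prod_div_distrib, Finset.prod_const]
      simp only [Finset.card_univ, Fintype.card_fin]
      rw [div_mul_div_comm, ← pow_succ']
    simp_rw [hL, hR] at key
    rw [integral_div, integral_div] at key
    have hne : C' ^ (M + 1) ≠ 0 := pow_ne_zero _ (ne_of_gt hC'0)
    rw [div_eq_div_iff hne hne] at key
    exact mul_right_cancel₀ hne key
  -- Step B: pointwise bound on |g n ω - gQ| in terms of dBL
  set A : ℝ := (M : ℝ) * C' ^ M * K + 1 with hAdef
  have hA0 : (0:ℝ) < A := by
    have : (0:ℝ) ≤ (M : ℝ) * C' ^ M * K := by positivity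
    linarith
  have hptw : ∀ n ω, |g n ω - gQ| ≤ A * dBL (κ n (X n ω)) Q := by
    intro n ω
    have hd0 := dBL_nonneg (κ n (X n ω)) Q
    have hKd : (0:ℝ) ≤ K * dBL (κ n (X n ω)) Q := mul_nonneg hK0.le hd0
    have hpb := prod_diff_bound (Finset.univ (α := Fin M))
      (fun i => ∫ x, f i x ∂(κ n (X n ω))) (fun i => ∫ x, f i x ∂Q) hC'1 hKd
      (fun i _ => habs_int _ i) (fun i _ => habs_int _ i)
      (fun i _ => le_dBL' (κ n (X n ω)) Q (hfb i) (hfl i))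
    simp only [Finset.card_univ, Fintype.card_fin] at hpb
    calc |g n ω - gQ| ≤ (M : ℝ) * C' ^ M * (K * dBL (κ n (X n ω)) Q) := hpb
    _ = ((M : ℝ) * C' ^ M * K) * dBL (κ n (X n ω)) Q := by ring
    _ ≤ A * dBL (κ n (X n ω)) Q := by
        apply mul_le_mul_of_nonneg_right _ hd0
        rw [hAdef]; linarith
  have htim : TendstoInMeasure Pr (fun n ω => |g n ω - gQ|) atTop (fun _ => 0) := by
    rw [tendstoInMeasure_iff_dist]
    intro ε hε
    have hsub : ∀ n, {ω | ε ≤ dist (|g n ω - gQ|) 0}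
        ⊆ {ω | ε / A ≤ dist (dBL (κ n (X n ω)) Q) 0} := by
      intro n ω hω
      simp only [Set.mem_setOf_eq, Real.dist_eq, sub_zero, abs_abs] at hω ⊢
      have hd0 := dBL_nonneg (κ n (X n ω)) Q
      rw [abs_of_nonneg hd0, div_le_iff₀ hA0]
      calc ε ≤ |g n ω - gQ| := hω
      _ ≤ A * dBL (κ n (X n ω)) Q := hptw n ω
      _ = dBL (κ n (X n ω)) Q * A := mul_comm _ _
    exact tendsto_of_tendsto_of_tendsto_of_le_of_le tendsto_const_nhds
      (tendstoInMeasure_iff_dist.1 hBL (ε / A) (div_pos hε hA0)) (fun n => zero_le)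
      (fun n => measure_mono (hsub n))
  -- integral of |g n - gQ| tends to 0
  set B : ℝ := 2 * C' ^ M with hBdef
  have hB0 : (0:ℝ) < B := by positivity
  have hdiffb : ∀ n ω, |g n ω - gQ| ≤ B := by
    intro n ω
    calc |g n ω - gQ| ≤ |g n ω| + |gQ| := abs_sub _ _
    _ ≤ C' ^ M + C' ^ M := add_le_add (hgb n ω) hgQb
    _ = B := by rw [hBdef]; ring
  have hdm : ∀ n, Measurable fun ω => |g n ω - gQ| :=
    fun n => ((hgm n).sub measurable_const).abs
  have hdint : ∀ n, Integrable (fun ω => |g n ω - gQ|) Pr := fun n =>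
    Integrable.mono' (integrable_const B) (hdm n).aestronglyMeasurable
      (ae_of_all _ fun ω => by rw [Real.norm_eq_abs, abs_abs]; exact hdiffb n ω)
  have hint0 : Tendsto (fun n => ∫ ω, |g n ω - gQ| ∂Pr) atTop (𝓝 0) := by
    rw [NormedAddCommGroup.tendsto_nhds_zero]
    intro ε hε
    have hε2 : (0:ℝ) < ε / 2 := half_pos hε
    have hmeasE : ∀ n, MeasurableSet {ω | ε/2 ≤ |g n ω - gQ|} :=
      fun n => measurableSet_le measurable_const (hdm n)
    have hPrE : Tendsto (fun n => Pr {ω | ε/2 ≤ |g n ω - gQ|}) atTop (𝓝 0) := by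
      have hseteq : ∀ n, {ω | ε/2 ≤ dist (|g n ω - gQ|) 0} = {ω | ε/2 ≤ |g n ω - gQ|} := by
        intro n; ext ω; simp [Real.dist_eq, abs_abs]
      have h := tendstoInMeasure_iff_dist.1 htim (ε/2) hε2
      simp_rw [hseteq] at h
      exact h
    have hPrE' : Tendsto (fun n => (Pr {ω | ε/2 ≤ |g n ω - gQ|}).toReal) atTop (𝓝 0) := by
      have h := (ENNReal.tendsto_toReal (a := 0) (by simp)).comp hPrE
      simpa [Function.comp_def] using h
    have hev : ∀ᶠ n in atTop, B * (Pr {ω | ε/2 ≤ |g n ω - gQ|}).toReal < ε/2 := by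
      have h := hPrE'.const_mul B
      rw [mul_zero] at h
      exact h.eventually (gt_mem_nhds hε2)
    filter_upwards [hev] with n hn
    have hsplit : ∫ ω, |g n ω - gQ| ∂Pr
        ≤ B * (Pr {ω | ε/2 ≤ |g n ω - gQ|}).toReal + ε/2 := by
      set E := {ω | ε/2 ≤ |g n ω - gQ|} with hE
      have hptle : ∀ ω, |g n ω - gQ| ≤ E.indicator (fun _ => B) ω + ε/2 := by
        intro ω
        by_cases hω : ω ∈ E
        · rw [Set.indicator_of_mem hω]
          linarith [hdiffb n ω, hε2.le]
        · rw [Set.indicator_of_notMem hω]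
          simp only [hE, Set.mem_setOf_eq, not_le] at hω
          linarith
      have hIind : Integrable (fun ω => E.indicator (fun _ => B) ω + ε/2) Pr :=
        ((integrable_const B).indicator (hmeasE n)).add (integrable_const _)
      calc ∫ ω, |g n ω - gQ| ∂Pr ≤ ∫ ω, (E.indicator (fun _ => B) ω + ε/2) ∂Pr :=
        integral_mono (hdint n) hIind hptle
      _ = B * (Pr E).toReal + ε/2 := by
          rw [integral_add ((integrable_const B).indicator (hmeasE n)) (integrable_const _),
            integral_indicator_const _ (hmeasE n), integral_const]
          simp [mul_comm, measureReal_def, hE]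
    rw [Real.norm_eq_abs, abs_of_nonneg (integral_nonneg fun ω => abs_nonneg _)]
    calc ∫ ω, |g n ω - gQ| ∂Pr ≤ B * (Pr {ω | ε/2 ≤ |g n ω - gQ|}).toReal + ε/2 := hsplit
    _ < ε/2 + ε/2 := by linarith
    _ = ε := add_halves ε
  -- Step C: combine
  have hf₀m : ∀ n, Measurable fun ω => f₀ (T n (X n ω)) :=
    fun n => hf₀c.measurable.comp ((hT n).comp (hX n))
  have hf₀int : ∀ n, Integrable (fun ω => f₀ (T n (X n ω))) Pr := fun n =>
    Integrable.mono' (integrable_const C') (hf₀m n).aestronglyMeasurable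
      (ae_of_all _ fun ω => by rw [Real.norm_eq_abs]; exact le_trans (hf₀b _) hCC')
  have hprod_int : ∀ n, Integrable (fun ω => f₀ (T n (X n ω)) * (g n ω - gQ)) Pr := fun n =>
    Integrable.mono' (integrable_const (C' * B))
      (((hf₀m n).mul ((hgm n).sub measurable_const)).aestronglyMeasurable)
      (ae_of_all _ fun ω => by
        rw [Real.norm_eq_abs, abs_mul]
        exact mul_le_mul (le_trans (hf₀b _) hCC') (hdiffb n ω) (abs_nonneg _) hC'0.le)
  have hsplit2 : ∀ n, ∫ ω, f₀ (T n (X n ω)) * g n ω ∂Pr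
      = (∫ ω, f₀ (T n (X n ω)) * (g n ω - gQ) ∂Pr) + gQ * ∫ ω, f₀ (T n (X n ω)) ∂Pr := by
    intro n
    rw [← integral_const_mul gQ, ← integral_add (hprod_int n) (((hf₀int n).const_mul gQ))]
    congr 1
    funext ω
    ring
  have hlim1 : Tendsto (fun n => ∫ ω, f₀ (T n (X n ω)) * (g n ω - gQ) ∂Pr) atTop (𝓝 0) := by
    refine squeeze_zero_norm (a := fun n => C' * ∫ ω, |g n ω - gQ| ∂Pr) (fun n => ?_) ?_
    · rw [Real.norm_eq_abs]
      calc |∫ ω, f₀ (T n (X n ω)) * (g n ω - gQ) ∂Pr|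
          ≤ ∫ ω, |f₀ (T n (X n ω)) * (g n ω - gQ)| ∂Pr := by
            have h := norm_integral_le_integral_norm (μ := Pr)
              (f := fun ω => f₀ (T n (X n ω)) * (g n ω - gQ))
            simpa only [Real.norm_eq_abs] using h
      _ ≤ ∫ ω, C' * |g n ω - gQ| ∂Pr := by
          apply integral_mono (hprod_int n).abs ((hdint n).const_mul C')
          intro ω
          dsimp only
          rw [abs_mul]
          exact mul_le_mul_of_nonneg_right (le_trans (hf₀b _) hCC') (abs_nonneg _)
      _ = C' * ∫ ω, |g n ω - gQ| ∂Pr := integral_const_mul _ _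
    · have h := hint0.const_mul C'
      rwa [mul_zero] at h
  set F₀ : D →ᵇ ℝ := BoundedContinuousFunction.ofNormedAddCommGroup f₀ hf₀c C
    (fun x => by rw [Real.norm_eq_abs]; exact hf₀b x) with hF₀
  have hF₀coe : ∀ x, F₀ x = f₀ x := fun x => rfl
  have hlim2 : Tendsto (fun n => gQ * ∫ ω, f₀ (T n (X n ω)) ∂Pr) atTop
      (𝓝 (gQ * ∫ x, f₀ x ∂Q')) := by
    have h := hSweak F₀
    simp only [hF₀coe] at h
    exact h.const_mul gQ
  have hfinal := hlim1.add hlim2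
  rw [zero_add] at hfinal
  have heq : ∀ n, ∫ ω, f₀ (T n (X n ω)) * ∏ i, f i (S n i ω) ∂Pr
      = (∫ ω, f₀ (T n (X n ω)) * (g n ω - gQ) ∂Pr) + gQ * ∫ ω, f₀ (T n (X n ω)) ∂Pr :=
    fun n => (hrw n).trans (hsplit2 n)
  rw [show (∫ x, f₀ x ∂Q') * gQ = gQ * ∫ x, f₀ x ∂Q' from mul_comm _ _]
  exact Tendsto.congr (fun n => (heq n).symm) hfinal
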